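/- Let ρ be a positive semidefinite matrix. Then for all matrices A, B, C the Cauchy–Schwarz inequality for states holds: |tr(ρ · A† · B · C)| ≤ ‖B‖ · √(tr(ρ · A† · A)) · √(tr(ρ · C† · C)). -/

import Mathlib

open Matrix
open scoped ComplexOrder Matrix.Norms.L2Operator

private noncomputable def vecm {n : Type*} [Fintype n] (M : Matrix n n ℂ) :
    EuclideanSpace ℂ (n × n) := WithLp.toLp 2 (fun p : n × n => M p.1 p.2)

private lemma inner_vecm {n : Type*} [Fintype n] (M N : Matrix n n ℂ) :
    (inner ℂ (vecm M) (vecm N) : ℂ) = (Mᴴ * N).trace := by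
  simp only [PiLp.inner_apply, RCLike.inner_apply, vecm, Matrix.trace,
    Matrix.diag_apply, Matrix.mul_apply, Matrix.conjTranspose_apply]
  rw [Fintype.sum_prod_type, Finset.sum_comm]
  simp only [starRingEnd_apply]
  exact Finset.sum_congr rfl fun _ _ => Finset.sum_congr rfl fun _ _ => mul_comm _ _

private lemma norm_vecm_mul_le {n : Type*} [Fintype n] [DecidableEq n]
    (B Y : Matrix n n ℂ) : ‖vecm (B * Y)‖ ≤ ‖B‖ * ‖vecm Y‖ := by
  have h2 : ‖vecm (B * Y)‖ ^ 2 ≤ (‖B‖ * ‖vecm Y‖) ^ 2 := by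
    have hsq : ∀ M : Matrix n n ℂ, ‖vecm M‖ ^ 2 = ∑ j, ∑ i, ‖M i j‖ ^ 2 := by
      intro M
      rw [EuclideanSpace.norm_eq, Real.sq_sqrt (by positivity)]
      rw [Fintype.sum_prod_type, Finset.sum_comm]
      rfl
    rw [hsq, mul_pow, hsq, Finset.mul_sum]
    refine Finset.sum_le_sum fun j _ => ?_
    set y : EuclideanSpace ℂ n := WithLp.toLp 2 (fun i => Y i j) with hy
    have key : ‖(EuclideanSpace.equiv n ℂ).symm (B *ᵥ y)‖ ≤ ‖B‖ * ‖y‖ :=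
      Matrix.l2_opNorm_mulVec B y
    have h1 : ‖(EuclideanSpace.equiv n ℂ).symm (B *ᵥ y)‖ ^ 2
        = ∑ i, ‖(B * Y) i j‖ ^ 2 := by
      rw [EuclideanSpace.norm_eq, Real.sq_sqrt (by positivity)]
      simp [hy, Matrix.mul_apply, Matrix.mulVec, dotProduct]
    have h2' : ‖y‖ ^ 2 = ∑ i, ‖Y i j‖ ^ 2 := by
      rw [EuclideanSpace.norm_eq, Real.sq_sqrt (by positivity)]
    calc ∑ i, ‖(B * Y) i j‖ ^ 2
        = ‖(EuclideanSpace.equiv n ℂ).symm (B *ᵥ y)‖ ^ 2 := h1.symm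
      _ ≤ (‖B‖ * ‖y‖) ^ 2 := by
          apply pow_le_pow_left₀ (norm_nonneg _) key
      _ = ‖B‖ ^ 2 * ∑ i, ‖Y i j‖ ^ 2 := by rw [mul_pow, h2']
  calc ‖vecm (B * Y)‖ = √(‖vecm (B * Y)‖ ^ 2) := by
        rw [Real.sqrt_sq (norm_nonneg _)]
    _ ≤ √((‖B‖ * ‖vecm Y‖) ^ 2) := Real.sqrt_le_sqrt h2
    _ = ‖B‖ * ‖vecm Y‖ := Real.sqrt_sq (by positivity)

/-- Cauchy–Schwarz inequality for the state defined by a positive semidefinite matrix `ρ`: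
`|tr(ρ A† B C)| ≤ ‖B‖ √tr(ρ A† A) √tr(ρ C† C)`. -/
theorem state_cauchy_schwarz
    {n : Type*} [Fintype n] [DecidableEq n] [Nonempty n]
    (ρ : Matrix n n ℂ) (hρ : ρ.PosSemidef) :
    ∀ A B C : Matrix n n ℂ,
      ‖(ρ * Aᴴ * B * C).trace‖
        ≤ ‖B‖ * Real.sqrt ((ρ * Aᴴ * A).trace.re) * Real.sqrt ((ρ * Cᴴ * C).trace.re) := by
  intro A B C
  open scoped MatrixOrder in set S := CFC.sqrt ρ with hSdef
  have hSH : Sᴴ = S := open scoped MatrixOrder in (CFC.sqrt_nonneg ρ).posSemidef.1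
  have hSS : S * S = ρ := open scoped MatrixOrder in CFC.sqrt_mul_sqrt_self ρ hρ.nonneg
  have htr : ∀ M N : Matrix n n ℂ, (ρ * (Mᴴ * N)).trace = ((M * S)ᴴ * (N * S)).trace := by
    intro M N
    rw [conjTranspose_mul, hSH, ← hSS, Matrix.mul_assoc S S,
      Matrix.trace_mul_comm S (S * (Mᴴ * N))]
    simp [Matrix.mul_assoc]
  have habs : (ρ * Aᴴ * B * C).trace = (ρ * (Aᴴ * (B * C))).trace := by
    simp [Matrix.mul_assoc]
  rw [habs, htr A (B * C)]
  have hBC : (B * C) * S = B * (C * S) := by rw [Matrix.mul_assoc]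
  rw [hBC, ← inner_vecm]
  have hcs : ‖(inner ℂ (vecm (A * S)) (vecm (B * (C * S))) : ℂ)‖
      ≤ ‖vecm (A * S)‖ * ‖vecm (B * (C * S))‖ := by
    simpa using norm_inner_le_norm (𝕜 := ℂ) (vecm (A * S)) (vecm (B * (C * S)))
  have hnormA : ‖vecm (A * S)‖ = Real.sqrt ((ρ * Aᴴ * A).trace.re) := by
    rw [norm_eq_sqrt_re_inner (𝕜 := ℂ), inner_vecm, ← htr A A]
    congr 2
    simp [Matrix.mul_assoc]
  have hnormC : ‖vecm (C * S)‖ = Real.sqrt ((ρ * Cᴴ * C).trace.re) := by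
    rw [norm_eq_sqrt_re_inner (𝕜 := ℂ), inner_vecm, ← htr C C]
    congr 2
    simp [Matrix.mul_assoc]
  calc ‖(inner ℂ (vecm (A * S)) (vecm (B * (C * S))) : ℂ)‖
      ≤ ‖vecm (A * S)‖ * ‖vecm (B * (C * S))‖ := hcs
    _ ≤ ‖vecm (A * S)‖ * (‖B‖ * ‖vecm (C * S)‖) := by
        apply mul_le_mul_of_nonneg_left (norm_vecm_mul_le B (C * S)) (norm_nonneg _)
    _ = ‖B‖ * ‖vecm (A * S)‖ * ‖vecm (C * S)‖ := by ring
    _ = ‖B‖ * Real.sqrt ((ρ * Aᴴ * A).trace.re) * Real.sqrt ((ρ * Cᴴ * C).trace.re) := by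
        rw [hnormA, hnormC]
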